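/- A symmetric OMZD(n) exists if and only if n is even and n ≠ 4. -/

import Mathlib

open Matrix

/-- An `n × n` real matrix is an OMZD: `A * Aᵀ = c • I` for some `c > 0`,
zero diagonal, and all off-diagonal entries nonzero. -/
def IsOMZD {n : ℕ} (A : Matrix (Fin n) (Fin n) ℝ) : Prop :=
  (∃ c : ℝ, 0 < c ∧ A * Aᵀ = c • (1 : Matrix (Fin n) (Fin n) ℝ)) ∧
  (∀ i, A i i = 0) ∧ (∀ i j, i ≠ j → A i j ≠ 0)

/-- A symmetric matrix whose square is a positive multiple of the identity and whose
diagonal vanishes has even size. -/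
lemma omzd_even (n : ℕ) (A : Matrix (Fin n) (Fin n) ℝ) (hsym : Aᵀ = A)
    (c : ℝ) (hc : 0 < c) (hmul : A * Aᵀ = c • (1 : Matrix (Fin n) (Fin n) ℝ))
    (hdiag : ∀ i, A i i = 0) : Even n := by
  have hA : A.IsHermitian := by
    rw [Matrix.IsHermitian, conjTranspose]
    ext i j; simpa using congrFun (congrFun hsym i) j
  have hAA : A * A = c • 1 := by rw [hsym] at hmul; exact hmul
  set μ := hA.eigenvalues with hμ
  -- each eigenvalue squares to c
  have hsq : ∀ i, μ i ^ 2 = c := by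
    intro i
    have hv := hA.mulVec_eigenvectorBasis i
    have hvne : (⇑(hA.eigenvectorBasis i) : Fin n → ℝ) ≠ 0 := by
      have := hA.eigenvectorBasis.orthonormal.1 i
      intro h
      rw [show (hA.eigenvectorBasis i : EuclideanSpace ℝ (Fin n)) = 0 from by
        ext k; exact congrFun h k] at this
      simp at this
    have h2 : (A * A) *ᵥ ⇑(hA.eigenvectorBasis i) = (μ i ^ 2) • ⇑(hA.eigenvectorBasis i) := by
      rw [← Matrix.mulVec_mulVec, hv, Matrix.mulVec_smul, hv, smul_smul, sq]
    rw [hAA, Matrix.smul_mulVec, Matrix.one_mulVec] at h2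
    have h3 : (c - μ i ^ 2) • (⇑(hA.eigenvectorBasis i) : Fin n → ℝ) = 0 := by
      rw [sub_smul, h2, sub_self]
    rcases smul_eq_zero.mp h3 with h | h
    · linarith [sub_eq_zero.mp (by linarith [h] : c - μ i ^ 2 = 0)]
    · exact absurd h hvne
  -- trace is zero
  have htr : ∑ i, μ i = 0 := by
    have h1 : A.trace = ∑ i, μ i := by
      nth_rewrite 1 [hA.spectral_theorem]
      rw [Unitary.conjStarAlgAut_apply, Matrix.trace_mul_cycle]
      rw [show (star (hA.eigenvectorUnitary : Matrix (Fin n) (Fin n) ℝ)) *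
            (hA.eigenvectorUnitary : Matrix (Fin n) (Fin n) ℝ) = 1 from
        Unitary.coe_star_mul_self _, Matrix.one_mul, Matrix.trace_diagonal]
      simp [hμ]
    rw [← h1, Matrix.trace]
    simp [Matrix.diag, hdiag]
  classical
  set r := Real.sqrt c with hrdef
  have hr : 0 < r := Real.sqrt_pos.mpr hc
  have hpm : ∀ i, μ i = r ∨ μ i = -r := by
    intro i
    have h2 : μ i ^ 2 = r ^ 2 := by rw [hrdef, Real.sq_sqrt hc.le, hsq]
    exact sq_eq_sq_iff_eq_or_eq_neg.mp h2
  set s := Finset.univ.filter (fun i => μ i = r) with hs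
  set t := Finset.univ.filter (fun i => ¬ μ i = r) with ht
  have hsum : ∑ i, μ i = s.card * r + t.card * (-r) := by
    rw [← Finset.sum_filter_add_sum_filter_not Finset.univ (fun i => μ i = r)]
    congr 1
    · rw [Finset.sum_congr rfl (fun i hi => (Finset.mem_filter.mp hi).2),
        Finset.sum_const, nsmul_eq_mul]
    · rw [Finset.sum_congr rfl (fun i hi => ?_), Finset.sum_const, nsmul_eq_mul]
      rcases hpm i with h | h
      · exact absurd h (Finset.mem_filter.mp hi).2
      · exact h
  have hcard : s.card + t.card = n := by
    rw [hs, ht, Finset.card_filter_add_card_filter_not]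
    simp
  have hst : (s.card : ℝ) = (t.card : ℝ) := by
    rw [htr] at hsum
    have : ((s.card : ℝ) - t.card) * r = 0 := by linarith
    rcases mul_eq_zero.mp this with h | h
    · linarith
    · exact absurd h hr.ne'
  have hst' : s.card = t.card := Nat.cast_injective hst
  exact ⟨s.card, by omega⟩

/-- There is no symmetric OMZD of order 4. -/
lemma omzd_not_four (A : Matrix (Fin 4) (Fin 4) ℝ) (hsym : Aᵀ = A)
    (c : ℝ) (hmul : A * Aᵀ = c • (1 : Matrix (Fin 4) (Fin 4) ℝ))
    (hdiag : ∀ i, A i i = 0) (hoff : ∀ i j, i ≠ j → A i j ≠ 0) : False := by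
  have horth : ∀ i j : Fin 4, i ≠ j → ∑ k, A i k * A j k = 0 := by
    intro i j hij
    have h := congrFun (congrFun hmul i) j
    rw [Matrix.mul_apply] at h
    simpa [Matrix.transpose_apply, Matrix.one_apply, hij, Matrix.smul_apply] using h
  have hs : ∀ i j : Fin 4, A j i = A i j := fun i j => congrFun (congrFun hsym i) j
  have e1 := horth 0 1 (by decide)
  have e5 := horth 1 3 (by decide)
  have e4 := horth 1 2 (by decide)
  rw [Fin.sum_univ_four] at e1 e5 e4
  rw [hdiag, hdiag] at e1 e5 e4
  simp only [hs 0 1, hs 0 2, hs 0 3, hs 1 2, hs 1 3, hs 2 3] at e1 e5 e4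
  have hd := hoff 0 3 (by decide)
  have he := hoff 1 2 (by decide)
  have hf := hoff 1 3 (by decide)
  have hg := hoff 2 3 (by decide)
  apply mul_ne_zero (mul_ne_zero (mul_ne_zero hd he) hf) hg
  linear_combination (-(1:ℝ)/2) * ((A 0 1 * A 0 3) * e1 - (A 0 3 * A 1 3) * e5 - (A 0 3 * A 1 2) * e4)

/-- Construction of a symmetric OMZD of order `m + m` for `m ≠ 2`. -/
lemma omzd_construction (m : ℕ) (hm : m ≠ 2) :
    ∃ A : Matrix (Fin (m+m)) (Fin (m+m)) ℝ, Aᵀ = A ∧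
      (∃ c : ℝ, 0 < c ∧ A * Aᵀ = c • (1 : Matrix (Fin (m+m)) (Fin (m+m)) ℝ)) ∧
      (∀ i, A i i = 0) ∧ (∀ i j, i ≠ j → A i j ≠ 0) := by
  set d : ℝ := 1 - m with hd
  set J : Matrix (Fin m) (Fin m) ℝ := of (fun _ _ => 1) with hJdef
  set X : Matrix (Fin m) (Fin m) ℝ := J - 1 with hX
  set Y : Matrix (Fin m) (Fin m) ℝ := J + d • 1 with hY
  have hJJ : J * J = (m : ℝ) • J := by
    ext i j
    simp [hJdef, Matrix.mul_apply, Matrix.smul_apply]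
  have hXs : Xᵀ = X := by
    ext i j
    simp [hX, hJdef, Matrix.transpose_apply, Matrix.one_apply, eq_comm]
  have hYs : Yᵀ = Y := by
    ext i j
    simp [hY, hJdef, Matrix.transpose_apply, Matrix.one_apply, eq_comm]
  have hcomm : X * Y = Y * X := by
    have h1 : Commute J (1 : Matrix (Fin m) (Fin m) ℝ) := Commute.one_right J
    exact (((Commute.refl J).add_right (h1.smul_right d)).sub_left
      ((Commute.one_left J).add_right ((Commute.one_left (1:Matrix (Fin m) (Fin m) ℝ)).smul_right d)))
  have hkey : X * X + Y * Y = (1 + d ^ 2) • 1 := by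
    have e1 : X * X = J * J - J - J + 1 := by
      rw [hX]; noncomm_ring
    have e2 : Y * Y = J * J + d • J + d • J + (d * d) • 1 := by
      rw [hY]
      simp only [mul_add, add_mul, smul_mul_assoc, mul_smul_comm, one_mul, mul_one, smul_smul,
        smul_add]
      abel
    rw [e1, e2, hJJ]
    have hdm : (m : ℝ) = 1 - d := by rw [hd]; ring
    rw [hdm]
    module
  set B : Matrix (Fin m ⊕ Fin m) (Fin m ⊕ Fin m) ℝ := fromBlocks X Y Y (-X) with hB
  have hBs : Bᵀ = B := by
    rw [hB, Matrix.fromBlocks_transpose, hXs, hYs, Matrix.transpose_neg, hXs]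
  have hBB : B * B = (1 + d ^ 2) • 1 := by
    rw [hB, Matrix.fromBlocks_multiply]
    have : -(X * Y) + Y * X = 0 := by rw [hcomm]; abel
    rw [show X * Y + Y * -X = 0 by rw [mul_neg, hcomm]; abel,
        show Y * X + -X * Y = 0 by rw [neg_mul, hcomm]; abel,
        show Y * Y + -X * -X = (1 + d^2) • 1 by rw [neg_mul_neg]; rw [add_comm]; exact hkey,
        hkey, ← Matrix.fromBlocks_one, Matrix.fromBlocks_smul]
    simp
  have hd2 : d ≠ -1 := by
    intro h
    apply hm
    have : (m : ℝ) = 2 := by rw [hd] at h; linarith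
    exact_mod_cast this
  refine ⟨(reindex finSumFinEquiv finSumFinEquiv) B, ?_, ⟨1 + d ^ 2, by positivity, ?_⟩, ?_, ?_⟩
  · rw [Matrix.transpose_reindex, hBs]
  · rw [show ((reindex finSumFinEquiv finSumFinEquiv) B)ᵀ
        = (reindex finSumFinEquiv finSumFinEquiv) Bᵀ from (Matrix.transpose_reindex _ _ _).symm, hBs]
    rw [Matrix.reindex_apply, Matrix.submatrix_mul_equiv, hBB]
    simp [Matrix.submatrix_smul, Matrix.submatrix_one_equiv]
  · intro i
    rw [Matrix.reindex_apply, Matrix.submatrix_apply]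
    rcases (finSumFinEquiv.symm i) with p | p <;>
      simp [hB, hX, hJdef, Matrix.one_apply]
  · intro i j hij
    rw [Matrix.reindex_apply, Matrix.submatrix_apply]
    have hij' : finSumFinEquiv.symm i ≠ finSumFinEquiv.symm j := fun h => hij (by
      simpa using congrArg finSumFinEquiv h)
    rcases hp : (finSumFinEquiv.symm i) with p | p <;> rcases hq : (finSumFinEquiv.symm j) with q | q
    · have hpq : p ≠ q := by rintro rfl; exact hij' (hp.trans hq.symm)
      simp [hB, hX, hJdef, Matrix.one_apply, hpq]
    · by_cases hpq : p = q <;>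
        simp [hB, hY, hJdef, Matrix.one_apply, hpq, hd2, sub_eq_iff_eq_add]
      · intro h; exact hd2 (by linarith)
    · by_cases hpq : p = q <;>
        simp [hB, hY, hJdef, Matrix.one_apply, hpq, hd2, sub_eq_iff_eq_add]
      · intro h; exact hd2 (by linarith)
    · have hpq : p ≠ q := by rintro rfl; exact hij' (hp.trans hq.symm)
      simp [hB, hX, hJdef, Matrix.one_apply, hpq]

theorem symmetric_omzd_exists_iff (n : ℕ) :
    (∃ A : Matrix (Fin n) (Fin n) ℝ, Aᵀ = A ∧ IsOMZD A) ↔ (Even n ∧ n ≠ 4) := by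
  constructor
  · rintro ⟨A, hsym, ⟨c, hc, hmul⟩, hdiag, hoff⟩
    refine ⟨omzd_even n A hsym c hc hmul hdiag, ?_⟩
    rintro rfl
    exact omzd_not_four A hsym c hmul hdiag hoff
  · rintro ⟨⟨m, rfl⟩, hne⟩
    have hm : m ≠ 2 := by omega
    obtain ⟨A, h1, h2, h3, h4⟩ := omzd_construction m hm
    exact ⟨A, h1, h2, h3, h4⟩
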